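/- Let M = {f_1,...,f_{4m+2}} ⊂ R^{2m+1} be as above and let S ⊆ M ∖ {f_{4m+2}} be span-closed in M ∖ {f_{4m+2}} (i.e., every element of M ∖ {f_{4m+2}} in the linear span of S lies in S). Then S can be written as a disjoint union S = S_0 ∪ S_1 ∪ ⋯ ∪ S_k where S_0 is linearly independent, each S_i (1 ≤ i ≤ k) is an interval of the form [e_{s_i}, e_{t_i}] = {f_j : 2s_i−1 ≤ j ≤ 2t_i−1}, and rank(S) = Σ_{i=0}^k rank(S_i). -/

import Mathlib

open Finset

noncomputable def nbM (m : ℕ) (i : Fin (4*m+2)) : Fin (2*m+1) → ℝ :=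
  if i.val = 4*m+1 then fun t => (-1 : ℝ) ^ (t : ℕ)
  else if i.val % 2 = 0 then
    fun t => if t.val = i.val / 2 then 1 else 0
  else
    fun t => if t.val = i.val / 2 then 1 else if t.val = i.val / 2 + 1 then -1 else 0

namespace Stmt5Aux

/-! ### Formulas for `nbM` -/

lemma nbM_even (m : ℕ) {j : ℕ} (h : 2*j < 4*m+2) :
    nbM m ⟨2*j, h⟩ = fun t : Fin (2*m+1) => if t.val = j then (1:ℝ) else 0 := by
  unfold nbM
  rw [if_neg (by simp; omega), if_pos (by simp [Nat.mul_mod_right])]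
  simp [Nat.mul_div_cancel_left]

lemma nbM_odd (m : ℕ) {j : ℕ} (h : 2*j+1 < 4*m+2) (hne : 2*j+1 ≠ 4*m+1) :
    nbM m ⟨2*j+1, h⟩ = fun t : Fin (2*m+1) =>
      if t.val = j then (1:ℝ) else if t.val = j+1 then -1 else 0 := by
  unfold nbM
  rw [if_neg (by simpa using hne), if_neg (by simp [Nat.add_mul_mod_self_left])]
  have h2 : (2*j+1)/2 = j := by omega
  simp [h2]

lemma nbM_odd_eq_sub (m : ℕ) {j : ℕ} (h2 : 2*j+2 < 4*m+2) :
    nbM m ⟨2*j+1, by omega⟩ =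
      nbM m ⟨2*j, by omega⟩ - nbM m ⟨2*(j+1), by omega⟩ := by
  have hne : 2*j+1 ≠ 4*m+1 := by omega
  rw [nbM_even m (j := j) (by omega), nbM_even m (j := j+1) (by omega),
    nbM_odd m (by omega) hne]
  funext t
  simp only [Pi.sub_apply]
  split_ifs <;> first | omega | norm_num

/-! ### Abstract runs in a bounded set of naturals -/

section Runs

variable {E : Set ℕ} {B : ℕ}

noncomputable def runLen (hE : ∀ j ∈ E, j ≤ B) (s : ℕ) : ℕ :=
  @Nat.find (fun d => s + d ∉ E) (fun _ => Classical.propDecidable _)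
    ⟨B + 1, fun h => by have := hE _ h; omega⟩

lemma runLen_spec (hE : ∀ j ∈ E, j ≤ B) (s : ℕ) : s + runLen hE s ∉ E :=
  @Nat.find_spec (fun d => s + d ∉ E) (fun _ => Classical.propDecidable _)
    ⟨B + 1, fun h => by have := hE _ h; omega⟩

lemma runLen_min (hE : ∀ j ∈ E, j ≤ B) {s u : ℕ} (h : u < runLen hE s) : s + u ∈ E :=
  not_not.mp (@Nat.find_min (fun d => s + d ∉ E) (fun _ => Classical.propDecidable _)
    ⟨B + 1, fun h' => by have := hE _ h'; omega⟩ u h)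

lemma runLen_pos (hE : ∀ j ∈ E, j ≤ B) {s : ℕ} (hs : s ∈ E) : 0 < runLen hE s := by
  rcases Nat.eq_zero_or_pos (runLen hE s) with h | h
  · exact absurd (by simpa [h] using runLen_spec hE s) (by simp [hs])
  · exact h

noncomputable def endR (hE : ∀ j ∈ E, j ≤ B) (s : ℕ) : ℕ := s + runLen hE s - 1

def Rset (E : Set ℕ) : Set ℕ := {s | s ∈ E ∧ ¬(0 < s ∧ s - 1 ∈ E)}

lemma self_le_endR (hE : ∀ j ∈ E, j ≤ B) {s : ℕ} (hs : s ∈ E) : s ≤ endR hE s := by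
  have := runLen_pos hE hs
  unfold endR
  omega

lemma mem_of_le_endR (hE : ∀ j ∈ E, j ≤ B) {s v : ℕ} (hs : s ∈ E)
    (h1 : s ≤ v) (h2 : v ≤ endR hE s) : v ∈ E := by
  have hp := runLen_pos hE hs
  have hlt : v - s < runLen hE s := by unfold endR at h2; omega
  have := runLen_min hE hlt
  rwa [Nat.add_sub_cancel' h1] at this

lemma le_endR_of_all (hE : ∀ j ∈ E, j ≤ B) {s j : ℕ} (hsj : s ≤ j)
    (hall : ∀ v, s ≤ v → v ≤ j → v ∈ E) : j ≤ endR hE s := by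
  have : j - s < runLen hE s := by
    by_contra h
    push_neg at h
    exact runLen_spec hE s (hall (s + runLen hE s) (by omega) (by omega))
  unfold endR
  omega

lemma succ_endR_not_mem (hE : ∀ j ∈ E, j ≤ B) {s : ℕ} (hs : s ∈ E) :
    endR hE s + 1 ∉ E := by
  have hp := runLen_pos hE hs
  have := runLen_spec hE s
  have he : endR hE s + 1 = s + runLen hE s := by unfold endR; omega
  rwa [he]

lemma mem_succ_le_endR (hE : ∀ j ∈ E, j ≤ B) {s j : ℕ} (hs : s ∈ E)
    (h1 : s ≤ j) (h2 : j ≤ endR hE s) (h3 : j + 1 ∈ E) : j + 1 ≤ endR hE s := by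
  rcases Nat.lt_or_ge (j+1) (endR hE s + 1) with h | h
  · omega
  · have he : j + 1 = endR hE s + 1 := by omega
    exact absurd (he ▸ h3) (succ_endR_not_mem hE hs)

lemma exists_run (hE : ∀ j ∈ E, j ≤ B) {j : ℕ} (hj : j ∈ E) :
    ∃ s ∈ Rset E, s ≤ j ∧ j ≤ endR hE s := by
  suffices h : ∃ s ∈ Rset E, s ≤ j ∧ ∀ v, s ≤ v → v ≤ j → v ∈ E by
    obtain ⟨s, hs, hsj, hall⟩ := h
    exact ⟨s, hs, hsj, le_endR_of_all hE hsj hall⟩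
  clear hE
  induction j using Nat.strong_induction_on with
  | _ j ih =>
    by_cases hstart : 0 < j ∧ j - 1 ∈ E
    · obtain ⟨s, hs, hsj, hall⟩ := ih (j-1) (by omega) hstart.2
      exact ⟨s, hs, by omega, fun v hv1 hv2 => by
        rcases Nat.lt_or_ge v j with h | h
        · exact hall v hv1 (by omega)
        · have : v = j := by omega
          exact this ▸ hj⟩
    · exact ⟨j, ⟨hj, hstart⟩, le_refl _, fun v hv1 hv2 => by
        have : v = j := by omega
        exact this ▸ hj⟩

lemma runs_disjoint (hE : ∀ j ∈ E, j ≤ B) {s s' v : ℕ}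
    (hs : s ∈ Rset E) (hs' : s' ∈ Rset E) (hne : s ≠ s')
    (h1 : s ≤ v) (h2 : v ≤ endR hE s) (h3 : s' ≤ v) (h4 : v ≤ endR hE s') : False := by
  wlog hlt : s < s' generalizing s s'
  · exact this hs' hs (Ne.symm hne) h3 h4 h1 h2 (by omega)
  have hmem : s' - 1 ∈ E := mem_of_le_endR hE hs.1 (by omega) (by omega)
  exact hs'.2 ⟨by omega, hmem⟩

end Runs

/-! ### Support submodules -/

def suppSub (n : ℕ) (C : Set (Fin n)) : Submodule ℝ (Fin n → ℝ) where
  carrier := {v | ∀ t, t ∉ C → v t = 0}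
  add_mem' := fun ha hb t ht => by simp [ha t ht, hb t ht]
  zero_mem' := fun t _ => rfl
  smul_mem' := fun c v hv t ht => by simp [hv t ht]

lemma mem_suppSub {n : ℕ} {C : Set (Fin n)} {v : Fin n → ℝ} :
    v ∈ suppSub n C ↔ ∀ t, t ∉ C → v t = 0 := Iff.rfl

lemma suppSub_mono {n : ℕ} {C C' : Set (Fin n)} (h : C ⊆ C') :
    suppSub n C ≤ suppSub n C' :=
  fun v hv t ht => hv t (fun hc => ht (h hc))

lemma suppSub_disjoint {n : ℕ} {C C' : Set (Fin n)} (h : ∀ t, t ∈ C → t ∉ C') :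
    Disjoint (suppSub n C) (suppSub n C') := by
  rw [Submodule.disjoint_def]
  intro v hv hv'
  funext t
  by_cases ht : t ∈ C
  · exact hv' t (h t ht)
  · exact hv t ht

lemma finrank_sup_sum {n k : ℕ} (W : Submodule ℝ (Fin n → ℝ))
    (U : Fin k → Submodule ℝ (Fin n → ℝ))
    (C0 : Set (Fin n)) (C : Fin k → Set (Fin n))
    (hW : W ≤ suppSub n C0) (hU : ∀ i, U i ≤ suppSub n (C i))
    (h0 : ∀ i, ∀ t, t ∈ C0 → t ∉ C i)
    (hC : ∀ i j, i ≠ j → ∀ t, t ∈ C i → t ∉ C j) :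
    Module.finrank ℝ ↥(W ⊔ ⨆ i, U i) =
      Module.finrank ℝ ↥W + ∑ i, Module.finrank ℝ ↥(U i) := by
  classical
  have key : ∀ s : Finset (Fin k),
      Module.finrank ℝ ↥(W ⊔ ⨆ i ∈ s, U i) =
        Module.finrank ℝ ↥W + ∑ i ∈ s, Module.finrank ℝ ↥(U i) := by
    intro s
    induction s using Finset.induction_on with
    | empty =>
      have hb : (⨆ i ∈ (∅ : Finset (Fin k)), U i) = ⊥ := by simp
      rw [hb, sup_bot_eq]
      simp
    | @insert a s ha ih =>
      rw [Finset.iSup_insert, Finset.sum_insert ha]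
      have hre : W ⊔ (U a ⊔ ⨆ i ∈ s, U i) = (W ⊔ ⨆ i ∈ s, U i) ⊔ U a := by
        rw [sup_comm (U a) _, ← sup_assoc]
      rw [hre]
      have hbig : (W ⊔ ⨆ i ∈ s, U i) ≤ suppSub n (C0 ∪ ⋃ i ∈ s, C i) := by
        apply sup_le
        · exact hW.trans (suppSub_mono Set.subset_union_left)
        · apply iSup_le; intro i; apply iSup_le; intro hi
          refine (hU i).trans (suppSub_mono ?_)
          exact (Set.subset_biUnion_of_mem hi).trans Set.subset_union_right
      have hdisj : Disjoint (W ⊔ ⨆ i ∈ s, U i) (U a) := by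
        refine Disjoint.mono hbig (hU a) (suppSub_disjoint ?_)
        intro t ht hta
        rcases ht with ht | ht
        · exact h0 a t ht hta
        · obtain ⟨i, hi⟩ := Set.mem_iUnion.mp ht
          obtain ⟨his, hti⟩ := Set.mem_iUnion.mp hi
          exact hC i a (fun h => ha (h ▸ his)) t hti hta
      have heq := Submodule.finrank_sup_add_finrank_inf_eq (W ⊔ ⨆ i ∈ s, U i) (U a)
      rw [hdisj.eq_bot, finrank_bot, add_zero] at heq
      rw [heq, ih]
      ring
  have huniv : (⨆ i, U i) = ⨆ i ∈ (Finset.univ : Finset (Fin k)), U i := by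
    simp
  rw [huniv, key Finset.univ]

/-! ### Linear independence of the odd vectors -/

noncomputable def phi (m : ℕ) : (Fin (2*m+1) → ℝ) →ₗ[ℝ] (Fin (2*m+1) → ℝ) :=
  LinearMap.pi fun t => ∑ u ∈ Finset.univ.filter (fun u => u ≤ t), LinearMap.proj u

lemma phi_apply (m : ℕ) (v : Fin (2*m+1) → ℝ) (t : Fin (2*m+1)) :
    phi m v t = ∑ u ∈ Finset.univ.filter (fun u => u ≤ t), v u := by
  simp [phi, LinearMap.pi_apply, LinearMap.sum_apply, LinearMap.proj_apply]

lemma phi_nbM_odd (m : ℕ) {x : Fin (4*m+2)} (hodd : x.val % 2 = 1)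
    (hne : x.val ≠ 4*m+1) :
    phi m (nbM m x) = Pi.single (⟨x.val/2, by omega⟩ : Fin (2*m+1)) (1:ℝ) := by
  classical
  obtain ⟨j, hx⟩ : ∃ j, x.val = 2*j+1 := ⟨x.val/2, by omega⟩
  have hxlt : x.val < 4*m+2 := x.isLt
  have hd : x.val / 2 = j := by omega
  simp only [hd]
  have hjlt : j + 1 < 2*m+1 := by omega
  have hform : nbM m x = fun t : Fin (2*m+1) =>
      if t.val = j then (1:ℝ) else if t.val = j+1 then -1 else 0 := by
    have hxx : x = ⟨2*j+1, by omega⟩ := by ext; exact hx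
    rw [hxx]
    exact nbM_odd m (by omega) (by omega)
  funext t
  rw [phi_apply, hform]
  have hsplit : ∀ u : Fin (2*m+1),
      (if u.val = j then (1:ℝ) else if u.val = j+1 then -1 else 0)
        = (if u = (⟨j, by omega⟩ : Fin (2*m+1)) then (1:ℝ) else 0)
          + (if u = (⟨j+1, by omega⟩ : Fin (2*m+1)) then (-1:ℝ) else 0) := by
    intro u
    simp only [Fin.ext_iff]
    split_ifs <;> first | omega | norm_num
  simp only [hsplit]
  rw [Finset.sum_add_distrib, Finset.sum_ite_eq', Finset.sum_ite_eq']
  simp only [Finset.mem_filter, Finset.mem_univ, true_and, Fin.le_def, Pi.single_apply,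
    Fin.ext_iff]
  split_ifs <;> first | omega | norm_num

lemma indep_odds (m : ℕ) (S0 : Set (Fin (4*m+2)))
    (hodd : ∀ x ∈ S0, x.val % 2 = 1 ∧ x.val ≠ 4*m+1) :
    LinearIndependent ℝ (fun x : S0 => nbM m x) := by
  classical
  apply LinearIndependent.of_comp (phi m)
  have hcomp : (phi m ∘ fun x : S0 => nbM m x)
      = fun x : S0 => Pi.single (⟨x.val.val/2, by omega⟩ : Fin (2*m+1)) (1:ℝ) := by
    funext x
    exact phi_nbM_odd m (hodd x x.2).1 (hodd x x.2).2
  rw [hcomp]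
  have hinj : Function.Injective
      (fun x : S0 => (⟨x.val.val/2, by omega⟩ : Fin (2*m+1))) := by
    intro x y hxy
    have hx := (hodd x x.2).1
    have hy := (hodd y y.2).1
    simp only [Fin.mk.injEq] at hxy
    ext
    omega
  have hli := (Pi.basisFun ℝ (Fin (2*m+1))).linearIndependent.comp _ hinj
  have hcomp2 : (⇑(Pi.basisFun ℝ (Fin (2*m+1))) ∘
      fun x : S0 => (⟨x.val.val/2, by omega⟩ : Fin (2*m+1)))
      = fun x : S0 => Pi.single (⟨x.val.val/2, by omega⟩ : Fin (2*m+1)) (1:ℝ) := by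
    funext x
    simp [Pi.basisFun_apply]
  rwa [hcomp2] at hli

end Stmt5Aux

open Stmt5Aux in
/-- structure of span-closed subsets of `M ∖ {f_{4m+2}}`: a disjoint union of
an independent set `S_0` and intervals `S_1, …, S_k`, additive in rank. -/
theorem stmt5 (m : ℕ) (A : Set (Fin (4*m+2)))
    (hlast : ∀ i ∈ A, i.val ≠ 4*m+1)
    (hclosed : ∀ i : Fin (4*m+2), i.val ≠ 4*m+1 →
      nbM m i ∈ Submodule.span ℝ (nbM m '' A) → i ∈ A) :
    ∃ (k : ℕ) (S0 : Set (Fin (4*m+2))) (T : Fin k → Set (Fin (4*m+2))),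
      A = S0 ∪ ⋃ i, T i ∧
      (∀ i, Disjoint S0 (T i)) ∧
      (Pairwise fun i j => Disjoint (T i) (T j)) ∧
      LinearIndependent ℝ (fun x : S0 => nbM m x) ∧
      (∀ i, ∃ s t : ℕ, s ≤ t ∧ t ≤ 2*m ∧
        T i = {j : Fin (4*m+2) | 2*s ≤ j.val ∧ j.val ≤ 2*t}) ∧
      Module.finrank ℝ (Submodule.span ℝ (nbM m '' A)) =
        Module.finrank ℝ (Submodule.span ℝ (nbM m '' S0)) +
          ∑ i, Module.finrank ℝ (Submodule.span ℝ (nbM m '' T i)) := by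
  classical
  -- membership at the level of naturals
  set A' : Set ℕ := {i | ∃ h : i < 4*m+2, (⟨i, h⟩ : Fin (4*m+2)) ∈ A} with hA'def
  have memA' : ∀ x : Fin (4*m+2), x ∈ A ↔ x.val ∈ A' := by
    intro x
    constructor
    · intro hx
      exact ⟨x.isLt, by simpa using hx⟩
    · rintro ⟨h, hx⟩
      simpa using hx
  have hA'lt : ∀ i ∈ A', i < 4*m+2 := by
    intro i hi; obtain ⟨h, _⟩ := hi; exact h
  have hA'ne : ∀ i ∈ A', i ≠ 4*m+1 := by
    intro i hi
    obtain ⟨h, hx⟩ := hi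
    exact hlast _ hx
  -- closure facts
  have hC1 : ∀ j : ℕ, 2*j ∈ A' → 2*j+1 ∈ A' → 2*(j+1) ∈ A' := by
    intro j h0 h1
    have hb1 : 2*j+1 < 4*m+2 := hA'lt _ h1
    have hb1' : 2*j+1 ≠ 4*m+1 := hA'ne _ h1
    have hb : 2*j+2 < 4*m+2 := by omega
    refine ⟨by omega, ?_⟩
    apply hclosed _ (by simp; omega)
    have hid : nbM m ⟨2*(j+1), by omega⟩ =
        nbM m ⟨2*j, by omega⟩ - nbM m ⟨2*j+1, by omega⟩ := by
      rw [nbM_odd_eq_sub m hb]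
      abel
    rw [hid]
    obtain ⟨p0, hx0⟩ := h0
    obtain ⟨p1, hx1⟩ := h1
    exact sub_mem (Submodule.subset_span ⟨_, hx0, rfl⟩)
      (Submodule.subset_span ⟨_, hx1, rfl⟩)
  have hC2 : ∀ j : ℕ, 2*j+1 ∈ A' → 2*(j+1) ∈ A' → 2*j ∈ A' := by
    intro j h1 h2
    have hb : 2*j+2 < 4*m+2 := by have := hA'lt _ h2; omega
    refine ⟨by omega, ?_⟩
    apply hclosed _ (by simp; omega)
    have hid : nbM m ⟨2*j, by omega⟩ =
        nbM m ⟨2*j+1, by omega⟩ + nbM m ⟨2*(j+1), by omega⟩ := by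
      rw [nbM_odd_eq_sub m hb]
      abel
    rw [hid]
    obtain ⟨p1, hx1⟩ := h1
    obtain ⟨p2, hx2⟩ := h2
    exact add_mem (Submodule.subset_span ⟨_, hx1, rfl⟩)
      (Submodule.subset_span ⟨_, hx2, rfl⟩)
  have hC3 : ∀ j : ℕ, 2*j ∈ A' → 2*(j+1) ∈ A' → 2*j+1 ∈ A' := by
    intro j h0 h2
    have hb : 2*j+2 < 4*m+2 := by have := hA'lt _ h2; omega
    refine ⟨by omega, ?_⟩
    apply hclosed _ (by simp; omega)
    rw [nbM_odd_eq_sub m hb]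
    obtain ⟨p0, hx0⟩ := h0
    obtain ⟨p2, hx2⟩ := h2
    exact sub_mem (Submodule.subset_span ⟨_, hx0, rfl⟩)
      (Submodule.subset_span ⟨_, hx2, rfl⟩)
  -- the set of "even" coordinates present
  set E : Set ℕ := {j | 2*j ∈ A'} with hEdef
  have hEB : ∀ j ∈ E, j ≤ 2*m := by
    intro j hj
    have := hA'lt _ hj
    omega
  -- runs
  have hRfin : (Rset E).Finite :=
    Set.Finite.subset (Set.finite_Iic (2*m)) (fun s hs => hEB s hs.1)
  set RF : Finset ℕ := hRfin.toFinset with hRFdef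
  set e : Fin RF.card ≃o {x // x ∈ RF} := RF.orderIsoOfFin rfl with hedef
  set sOf : Fin RF.card → ℕ := fun i => ((e i : {x // x ∈ RF}) : ℕ) with hsOfdef
  have hsOfR : ∀ i, sOf i ∈ Rset E := by
    intro i
    exact hRfin.mem_toFinset.mp (e i).2
  have hsOfInj : Function.Injective sOf := by
    intro i j h
    exact e.injective (Subtype.ext h)
  have hsOfSurj : ∀ s ∈ Rset E, ∃ i, sOf i = s := by
    intro s hs
    obtain ⟨i, hi⟩ := e.surjective ⟨s, hRfin.mem_toFinset.mpr hs⟩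
    exact ⟨i, by rw [hsOfdef]; simp [hi]⟩
  -- the pieces
  set S0 : Set (Fin (4*m+2)) := {x | x ∈ A ∧ x.val % 2 = 1 ∧ x.val / 2 ∉ E} with hS0def
  set T : Fin RF.card → Set (Fin (4*m+2)) :=
    fun i => {x | 2*(sOf i) ≤ x.val ∧ x.val ≤ 2*(endR hEB (sOf i))} with hTdef
  have hA : A = S0 ∪ ⋃ i, T i := by
    ext x
    simp only [Set.mem_union, Set.mem_iUnion]
    constructor
    · intro hx
      have hxA' : x.val ∈ A' := (memA' x).mp hx
      have hxlt : x.val < 4*m+2 := x.isLt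
      by_cases hpar : x.val % 2 = 1
      · by_cases hE1 : x.val / 2 ∈ E
        · obtain ⟨j, hj⟩ : ∃ j, x.val = 2*j+1 := ⟨x.val/2, by omega⟩
          have hjE : j ∈ E := by
            have hd : x.val/2 = j := by omega
            rwa [hd] at hE1
          have hj1E : j+1 ∈ E := hC1 j hjE (hj ▸ hxA')
          obtain ⟨s, hsR, hsle, hjle⟩ := exists_run hEB hjE
          have hj1le : j+1 ≤ endR hEB s := mem_succ_le_endR hEB hsR.1 hsle hjle hj1E
          obtain ⟨i, hi⟩ := hsOfSurj s hsR
          subst hi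
          exact Or.inr ⟨i, ⟨by omega, by omega⟩⟩
        · exact Or.inl ⟨hx, hpar, hE1⟩
      · obtain ⟨j, hj⟩ : ∃ j, x.val = 2*j := ⟨x.val/2, by omega⟩
        have hjE : j ∈ E := by
          show 2*j ∈ A'
          rwa [← hj]
        obtain ⟨s, hsR, hsle, hjle⟩ := exists_run hEB hjE
        obtain ⟨i, hi⟩ := hsOfSurj s hsR
        subst hi
        exact Or.inr ⟨i, ⟨by omega, by omega⟩⟩
    · intro hx
      rcases hx with hx | ⟨i, h1, h2⟩
      · exact hx.1
      · have hsR := hsOfR i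
        have h1' : 2*(sOf i) ≤ x.val := h1
        have h2' : x.val ≤ 2*(endR hEB (sOf i)) := h2
        have hrun : ∀ v, sOf i ≤ v → v ≤ endR hEB (sOf i) → v ∈ E :=
          fun v a b => mem_of_le_endR hEB hsR.1 a b
        by_cases hpar : x.val % 2 = 1
        · obtain ⟨j, hj⟩ : ∃ j, x.val = 2*j+1 := ⟨x.val/2, by omega⟩
          have hjE : j ∈ E := hrun j (by omega) (by omega)
          have hj1E : j+1 ∈ E := hrun (j+1) (by omega) (by omega)
          have hmem := hC3 j hjE hj1E
          exact (memA' x).mpr (by rw [hj]; exact hmem)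
        · obtain ⟨j, hj⟩ : ∃ j, x.val = 2*j := ⟨x.val/2, by omega⟩
          have hjE : j ∈ E := hrun j (by omega) (by omega)
          exact (memA' x).mpr (by rw [hj]; exact hjE)
  refine ⟨RF.card, S0, T, hA, ?_, ?_, ?_, ?_, ?_⟩
  -- 2) disjointness of S0 from the intervals
  · intro i
    rw [Set.disjoint_left]
    rintro x ⟨hxA, hpar, hnotE⟩ ⟨h1, h2⟩
    have h1' : 2*(sOf i) ≤ x.val := h1
    have h2' : x.val ≤ 2*(endR hEB (sOf i)) := h2
    obtain ⟨j, hj⟩ : ∃ j, x.val = 2*j+1 := ⟨x.val/2, by omega⟩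
    have hjE : j ∈ E :=
      mem_of_le_endR hEB (hsOfR i).1 (by omega) (by omega)
    have hd : x.val/2 = j := by omega
    rw [hd] at hnotE
    exact hnotE hjE
  -- 3) pairwise disjointness of intervals
  · intro i i' hne
    rw [Set.disjoint_left]
    rintro x ⟨h1, h2⟩ ⟨h3, h4⟩
    have h1' : 2*(sOf i) ≤ x.val := h1
    have h2' : x.val ≤ 2*(endR hEB (sOf i)) := h2
    have h3' : 2*(sOf i') ≤ x.val := h3
    have h4' : x.val ≤ 2*(endR hEB (sOf i')) := h4
    exact runs_disjoint hEB (hsOfR i) (hsOfR i')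
      (fun h => hne (hsOfInj h)) (v := x.val/2)
      (by omega) (by omega) (by omega) (by omega)
  -- 4) linear independence of S0
  · refine indep_odds m S0 (fun x hx => ⟨hx.2.1, ?_⟩)
    exact hA'ne x.val ((memA' x).mp hx.1)
  -- 5) interval shape
  · intro i
    have hsE : sOf i ∈ E := (hsOfR i).1
    refine ⟨sOf i, endR hEB (sOf i), self_le_endR hEB hsE, ?_, rfl⟩
    exact hEB _ (mem_of_le_endR hEB hsE (self_le_endR hEB hsE) le_rfl)
  -- 6) rank additivity
  · rw [hA, Set.image_union, Set.image_iUnion, Submodule.span_union,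
      Submodule.span_iUnion]
    refine finrank_sup_sum _ _ {t : Fin (2*m+1) | (t.val : ℕ) ∉ E}
      (fun i => {t : Fin (2*m+1) | sOf i ≤ t.val ∧ t.val ≤ endR hEB (sOf i)})
      ?_ ?_ ?_ ?_
    -- S0 vectors are supported off E
    · rw [Submodule.span_le]
      rintro v ⟨x, hxS, rfl⟩
      rw [SetLike.mem_coe, mem_suppSub]
      intro t ht
      have htE : (t.val : ℕ) ∈ E := not_not.mp ht
      obtain ⟨hxA, hpar, hnE⟩ := hxS
      have hxA' : x.val ∈ A' := (memA' x).mp hxA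
      have hxne : x.val ≠ 4*m+1 := hA'ne _ hxA'
      have hxlt : x.val < 4*m+2 := x.isLt
      obtain ⟨j, hj⟩ : ∃ j, x.val = 2*j+1 := ⟨x.val/2, by omega⟩
      have hjnE : j ∉ E := by
        have hd : x.val/2 = j := by omega
        rwa [hd] at hnE
      have hj1nE : j+1 ∉ E := fun hmem => hjnE (hC2 j (hj ▸ hxA') hmem)
      have hform : nbM m x = fun t : Fin (2*m+1) =>
          if t.val = j then (1:ℝ) else if t.val = j+1 then -1 else 0 := by
        have hxx : x = ⟨2*j+1, by omega⟩ := by ext; exact hj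
        rw [hxx]
        exact nbM_odd m (by omega) (by omega)
      rw [hform]
      simp only
      rw [if_neg (fun h : (t.val:ℕ) = j => hjnE (h ▸ htE)),
        if_neg (fun h : (t.val:ℕ) = j+1 => hj1nE (h ▸ htE))]
    -- interval vectors are supported on their coordinate interval
    · intro i
      rw [Submodule.span_le]
      rintro v ⟨x, hxT, rfl⟩
      rw [SetLike.mem_coe, mem_suppSub]
      intro t ht
      have h1' : 2*(sOf i) ≤ x.val := hxT.1
      have h2' : x.val ≤ 2*(endR hEB (sOf i)) := hxT.2
      have hendE : endR hEB (sOf i) ∈ E :=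
        mem_of_le_endR hEB (hsOfR i).1 (self_le_endR hEB (hsOfR i).1) le_rfl
      have hendle : endR hEB (sOf i) ≤ 2*m := hEB _ hendE
      have htC : ¬(sOf i ≤ (t.val:ℕ) ∧ (t.val:ℕ) ≤ endR hEB (sOf i)) := ht
      by_cases hpar : x.val % 2 = 1
      · obtain ⟨j, hj⟩ : ∃ j, x.val = 2*j+1 := ⟨x.val/2, by omega⟩
        have hform : nbM m x = fun t : Fin (2*m+1) =>
            if t.val = j then (1:ℝ) else if t.val = j+1 then -1 else 0 := by
          have hxx : x = ⟨2*j+1, by omega⟩ := by ext; exact hj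
          rw [hxx]
          exact nbM_odd m (by omega) (by omega)
        rw [hform]
        simp only
        rw [if_neg (fun h : (t.val:ℕ) = j => htC ⟨by omega, by omega⟩),
          if_neg (fun h : (t.val:ℕ) = j+1 => htC ⟨by omega, by omega⟩)]
      · obtain ⟨j, hj⟩ : ∃ j, x.val = 2*j := ⟨x.val/2, by omega⟩
        have hform : nbM m x = fun t : Fin (2*m+1) =>
            if t.val = j then (1:ℝ) else 0 := by
          have hxx : x = ⟨2*j, by omega⟩ := by ext; exact hj
          rw [hxx]
          exact nbM_even m (by omega)
        rw [hform]
        simp only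
        rw [if_neg (fun h : (t.val:ℕ) = j => htC ⟨by omega, by omega⟩)]
    -- disjoint supports: S0 block vs intervals
    · intro i t ht hti
      exact ht (mem_of_le_endR hEB (hsOfR i).1 hti.1 hti.2)
    -- disjoint supports: intervals pairwise
    · intro i i' hne t hti hti'
      exact runs_disjoint hEB (hsOfR i) (hsOfR i')
        (fun h => hne (hsOfInj h)) hti.1 hti.2 hti'.1 hti'.2
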